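/- (Andréief/Heine identity) Let f_1,...,f_n and g_1,...,g_n be integrable functions on a measure space (E, μ). Then (1/n!) ∫_{E^n} det(f_i(x_j))_{1≤i,j≤n} det(g_i(x_j))_{1≤i,j≤n} dμ(x_1)...dμ(x_n) = det( ∫_E f_i(x) g_j(x) dμ(x) )_{1≤i,j≤n}. -/

import Mathlib

open MeasureTheory

open Equiv Finset in
theorem andreief_identity {E : Type*} [MeasurableSpace E] (μ : Measure E)
    [SigmaFinite μ] (n : ℕ) (f g : Fin n → E → ℝ)
    (h : ∀ i j, Integrable (fun x => f i x * g j x) μ) :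
    ((n.factorial : ℝ))⁻¹ *
      ∫ x : Fin n → E,
        Matrix.det (Matrix.of fun i j => f i (x j)) *
          Matrix.det (Matrix.of fun i j => g i (x j)) ∂(Measure.pi fun _ => μ) =
    Matrix.det (Matrix.of fun i j => ∫ x, f i x * g j x ∂μ) := by
  classical
  letI : MeasureSpace E := ⟨μ⟩
  have hpi : (Measure.pi fun _ : Fin n => μ) = (volume : Measure (Fin n → E)) :=
    (volume_pi).symm
  set A : Matrix (Fin n) (Fin n) ℝ := Matrix.of fun i j => ∫ x, f i x * g j x ∂μ with hA
  have step1 : ∀ x : Fin n → E,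
      Matrix.det (Matrix.of fun i j => f i (x j)) *
        Matrix.det (Matrix.of fun i j => g i (x j)) =
      ∑ σ : Perm (Fin n), ∑ τ : Perm (Fin n),
        (((Perm.sign σ : ℤ) : ℝ) * ((Perm.sign τ : ℤ) : ℝ)) *
          ∏ j, (f (σ j) (x j) * g (τ j) (x j)) := by
    intro x
    rw [Matrix.det_apply', Matrix.det_apply', Finset.sum_mul_sum]
    refine Finset.sum_congr rfl fun σ _ => Finset.sum_congr rfl fun τ _ => ?_
    simp only [Matrix.of_apply]
    rw [mul_mul_mul_comm, ← Finset.prod_mul_distrib]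
  have hint : ∀ σ τ : Perm (Fin n),
      Integrable (fun x : Fin n → E =>
        (((Perm.sign σ : ℤ) : ℝ) * ((Perm.sign τ : ℤ) : ℝ)) *
          ∏ j, (f (σ j) (x j) * g (τ j) (x j))) (Measure.pi fun _ => μ) := by
    intro σ τ
    rw [hpi]
    exact (Integrable.fintype_prod (f := fun j x => f (σ j) x * g (τ j) x)
      (fun j => h (σ j) (τ j))).const_mul _
  have step2 : (∫ x : Fin n → E,
      Matrix.det (Matrix.of fun i j => f i (x j)) *
        Matrix.det (Matrix.of fun i j => g i (x j)) ∂(Measure.pi fun _ => μ)) =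
      ∑ σ : Perm (Fin n), ∑ τ : Perm (Fin n),
        (((Perm.sign σ : ℤ) : ℝ) * ((Perm.sign τ : ℤ) : ℝ)) * ∏ j, A (σ j) (τ j) := by
    simp_rw [step1]
    rw [integral_finset_sum _ (fun σ _ => integrable_finset_sum _ (fun τ _ => hint σ τ))]
    refine Finset.sum_congr rfl fun σ _ => ?_
    rw [integral_finset_sum _ (fun τ _ => hint σ τ)]
    refine Finset.sum_congr rfl fun τ _ => ?_
    rw [MeasureTheory.integral_const_mul]
    congr 1
    rw [MeasureTheory.integral_fintype_prod_eq_prod (ι := Fin n)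
      (f := fun j y => f (σ j) y * g (τ j) y)]
    rfl
  have hsq : ∀ τ : Perm (Fin n),
      ((Perm.sign τ : ℤ) : ℝ) * ((Perm.sign τ : ℤ) : ℝ) = 1 := by
    intro τ
    rcases Int.units_eq_one_or (Perm.sign τ) with h1 | h1 <;> simp [h1]
  have alg : ∑ σ : Perm (Fin n), ∑ τ : Perm (Fin n),
      (((Perm.sign σ : ℤ) : ℝ) * ((Perm.sign τ : ℤ) : ℝ)) * ∏ j, A (σ j) (τ j)
      = (n.factorial : ℝ) * A.det := by
    rw [Finset.sum_comm]
    have inner : ∀ τ : Perm (Fin n), ∑ σ : Perm (Fin n),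
        (((Perm.sign σ : ℤ) : ℝ) * ((Perm.sign τ : ℤ) : ℝ)) * ∏ j, A (σ j) (τ j)
        = A.det := by
      intro τ
      rw [← Equiv.sum_comp (Equiv.mulRight τ)
        (fun σ => (((Perm.sign σ : ℤ) : ℝ) * ((Perm.sign τ : ℤ) : ℝ)) * ∏ j, A (σ j) (τ j)),
        Matrix.det_apply']
      refine Finset.sum_congr rfl fun ρ _ => ?_
      have hprod : ∏ j, A ((ρ * τ) j) (τ j) = ∏ j, A (ρ j) j := by
        simpa [Equiv.Perm.mul_apply] using
          Equiv.prod_comp τ (fun j => A (ρ j) j)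
      simp only [Equiv.coe_mulRight, hprod]
      rw [map_mul]
      push_cast
      have := hsq τ
      push_cast at this ⊢
      linear_combination (((Perm.sign ρ : ℤ) : ℝ) * ∏ j, A (ρ j) j) * this
    simp_rw [inner]
    rw [Finset.sum_const, Finset.card_univ, Fintype.card_perm, Fintype.card_fin,
      nsmul_eq_mul]
  rw [step2, alg, inv_mul_cancel_left₀ (by exact_mod_cast n.factorial_ne_zero)]
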